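/- Let F be a Pythagorean field of characteristic not 2 and H = H(1,1)_F the quaternion algebra with i² = j² = −1. Define v₁(x₁,x₂) = x₁x₂ − x₂x₁ and recursively v_k(x₁,…,x_{2^k}) = v₁(v_{k−1}(x₁,…,x_{2^{k−1}}), v_{k−1}(x_{2^{k−1}+1},…,x_{2^k})). Then for every positive integer k, the image v_k(H) = {v_k(a₁,…,a_{2^k}) : aᵢ ∈ H} equals the set of commutators {xy − yx : x, y ∈ H}. -/
import Mathlib


open Quaternion

set_option maxHeartbeats 1600000 in
/-- Every pure quaternion is a commutator (char ≠ 2). -/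
lemma pure_isComm (F : Type*) [Field F] (h2 : (2 : F) ≠ 0) (a b c : F) :
    ∃ y z : ℍ[F,-1,-1], (⟨0,a,b,c⟩ : ℍ[F,-1,-1]) = y * z - z * y := by
  by_cases h1 : b^2 + c^2 ≠ 0
  · refine ⟨⟨0,0,c,-b⟩, ⟨0, -(1/2), a*b/(2*(b^2+c^2)), a*c/(2*(b^2+c^2))⟩, ?_⟩
    ext <;> simp <;> field_simp <;> ring
  by_cases h2' : a^2 + c^2 ≠ 0
  · refine ⟨⟨0,-c,0,a⟩, ⟨0, a*b/(2*(a^2+c^2)), -(1/2), b*c/(2*(a^2+c^2))⟩, ?_⟩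
    ext <;> simp <;> field_simp <;> ring
  by_cases h3 : a^2 + b^2 ≠ 0
  · refine ⟨⟨0,b,-a,0⟩, ⟨0, a*c/(2*(a^2+b^2)), b*c/(2*(a^2+b^2)), -(1/2)⟩, ?_⟩
    ext <;> simp <;> field_simp <;> ring
  · push_neg at h1 h2' h3
    have ha : a = 0 := by
      have : a ^ 2 * 2 = 0 := by linear_combination h2' + h3 - h1
      have := mul_eq_zero.mp this
      rcases this with h | h
      · exact pow_eq_zero_iff (n := 2) (by norm_num) |>.mp h
      · exact absurd h h2
    have hb : b = 0 := by
      have : b ^ 2 * 2 = 0 := by linear_combination h1 + h3 - h2'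
      rcases mul_eq_zero.mp this with h | h
      · exact pow_eq_zero_iff (n := 2) (by norm_num) |>.mp h
      · exact absurd h h2
    have hc : c = 0 := by
      have : c ^ 2 * 2 = 0 := by linear_combination h1 + h2' - h3
      rcases mul_eq_zero.mp this with h | h
      · exact pow_eq_zero_iff (n := 2) (by norm_num) |>.mp h
      · exact absurd h h2
    exact ⟨0, 0, by ext <;> simp [ha, hb, hc]⟩

/-- A commutator only depends on the pure parts. -/
lemma comm_pure (F : Type*) [Field F] (x y : ℍ[F,-1,-1]) :
    x * y - y * x = (⟨0,x.imI,x.imJ,x.imK⟩ : ℍ[F,-1,-1]) * ⟨0,y.imI,y.imJ,y.imK⟩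
      - (⟨0,y.imI,y.imJ,y.imK⟩ : ℍ[F,-1,-1]) * ⟨0,x.imI,x.imJ,x.imK⟩ := by
  ext <;> simp <;> ring

/-- Image of the iterated commutator polynomial `v_k`:
`vImg H 1` is the set of commutators and
`vImg H (k+1) = {uv - vu : u, v ∈ vImg H k}`. -/
def vImg (H : Type*) [Ring H] : ℕ → Set H
  | 0 => Set.univ
  | n + 1 => {x : H | ∃ u ∈ vImg H n, ∃ v ∈ vImg H n, x = u * v - v * u}

/-- over a Pythagorean field of characteristic not 2, the image of every
iterated commutator polynomial `v_k` on `ℍ(1,1)_F` equals the set of commutators. -/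
theorem stmt_9 (F : Type*) [Field F] (h2 : (2 : F) ≠ 0)
    (hpyth : ∀ x y : F, ∃ z : F, x ^ 2 + y ^ 2 = z ^ 2)
    (k : ℕ) (hk : 1 ≤ k) :
    vImg ℍ[F, -1, -1] k =
      {x : ℍ[F, -1, -1] | ∃ y z : ℍ[F, -1, -1], x = y * z - z * y} := by
  induction k, hk using Nat.le_induction with
  | base =>
    ext x
    simp only [vImg, Set.mem_setOf_eq, Set.mem_univ]
    constructor
    · rintro ⟨u, -, v, -, rfl⟩; exact ⟨u, v, rfl⟩
    · rintro ⟨y, z, rfl⟩; exact ⟨y, trivial, z, trivial, rfl⟩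
  | succ n hn ih =>
    ext x
    simp only [vImg, ih, Set.mem_setOf_eq]
    constructor
    · rintro ⟨u, -, v, -, rfl⟩; exact ⟨u, v, rfl⟩
    · rintro ⟨y, z, rfl⟩
      refine ⟨⟨0,y.imI,y.imJ,y.imK⟩, pure_isComm F h2 _ _ _,
        ⟨0,z.imI,z.imJ,z.imK⟩, pure_isComm F h2 _ _ _, comm_pure F y z⟩
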